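/- Let A = (a_{mn})_{m,n∈ℤ} be a complex matrix in Σ_α (summable α-slants: ∑_{j∈ℤ} sup_m |a_{m,⌈αm⌉+j}| < ∞) with α > 1. Then 0 is an approximate eigenvalue of A on ℓ^p(ℤ,ℂ) for every p ∈ [1,∞]: for every ε > 0 there exists x ∈ ℓ^p with ‖x‖_p = 1 and ‖Ax‖_p ≤ ε. In particular, A is not bounded below on any ℓ^p. -/

import Mathlib

open scoped ENNReal

noncomputable def lpEval (p : ℝ≥0∞) [Fact (1 ≤ p)] (m : ℤ) :
    lp (fun _ : ℤ => ℂ) p →L[ℂ] ℂ :=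
  LinearMap.mkContinuous
    { toFun := fun f => (f : ℤ → ℂ) m
      map_add' := fun f g => by simp only []; rw [show ((f + g : lp (fun _ : ℤ => ℂ) p) : ℤ → ℂ) = (f : ℤ → ℂ) + g from lp.coeFn_add f g]; rfl
      map_smul' := fun c f => by simp only []; rw [show ((c • f : lp (fun _ : ℤ => ℂ) p) : ℤ → ℂ) = c • (f : ℤ → ℂ) from lp.coeFn_smul c f]; rfl }
    1 (fun f => by
      rw [one_mul]
      exact lp.norm_apply_le_norm
        (zero_lt_one.trans_le (Fact.out : 1 ≤ p)).ne' f m)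

@[simp] lemma lpEval_apply (p : ℝ≥0∞) [Fact (1 ≤ p)] (m : ℤ)
    (f : lp (fun _ : ℤ => ℂ) p) : lpEval p m f = (f : ℤ → ℂ) m := rfl

lemma pullback_lp {p : ℝ≥0∞} [Fact (1 ≤ p)] (w : lp (fun _ : ℤ => ℂ) p)
    (g : ℤ → ℤ) (hg : Function.Injective g) (f : ℤ → ℂ) (C : ℝ) (hC : 0 ≤ C)
    (hfw : ∀ m, ‖f m‖ ≤ C * ‖(w : ℤ → ℂ) (g m)‖) :
    ∃ hf : Memℓp f p, ‖(⟨f, hf⟩ : lp (fun _ : ℤ => ℂ) p)‖ ≤ C * ‖w‖ := by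
  have hp1 : 1 ≤ p := Fact.out
  have hp0 : p ≠ 0 := (zero_lt_one.trans_le hp1).ne'
  rcases eq_or_ne p ∞ with rfl | hptop
  · have hb : ∀ m, ‖f m‖ ≤ C * ‖w‖ := fun m =>
      (hfw m).trans (mul_le_mul_of_nonneg_left (lp.norm_apply_le_norm hp0 w (g m)) hC)
    refine ⟨memℓp_infty ⟨C * ‖w‖, ?_⟩, ?_⟩
    · rintro _ ⟨m, rfl⟩; exact hb m
    · exact lp.norm_le_of_forall_le (mul_nonneg hC (norm_nonneg w)) hb
  · have hq : 0 < p.toReal := ENNReal.toReal_pos hp0 hptop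
    have hws : Summable fun n => ‖(w : ℤ → ℂ) n‖ ^ p.toReal := (lp.memℓp w).summable hq
    have hwg : Summable fun m => ‖(w : ℤ → ℂ) (g m)‖ ^ p.toReal := hws.comp_injective hg
    have hfb : ∀ m, ‖f m‖ ^ p.toReal ≤ C ^ p.toReal * ‖(w : ℤ → ℂ) (g m)‖ ^ p.toReal := by
      intro m
      rw [← Real.mul_rpow hC (norm_nonneg _)]
      exact Real.rpow_le_rpow (norm_nonneg _) (hfw m) hq.le
    have hfs : Summable fun m => ‖f m‖ ^ p.toReal :=
      Summable.of_nonneg_of_le (fun m => Real.rpow_nonneg (norm_nonneg _) _) hfb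
        (hwg.mul_left _)
    refine ⟨memℓp_gen hfs, ?_⟩
    apply lp.norm_le_of_tsum_le hq (mul_nonneg hC (norm_nonneg w))
    have h1 : ∑' m, ‖f m‖ ^ p.toReal ≤ C ^ p.toReal * ∑' n, ‖(w : ℤ → ℂ) n‖ ^ p.toReal := by
      calc ∑' m, ‖f m‖ ^ p.toReal
          ≤ ∑' m, C ^ p.toReal * ‖(w : ℤ → ℂ) (g m)‖ ^ p.toReal :=
            Summable.tsum_le_tsum hfb hfs (hwg.mul_left _)
        _ = C ^ p.toReal * ∑' m, ‖(w : ℤ → ℂ) (g m)‖ ^ p.toReal := tsum_mul_left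
        _ ≤ C ^ p.toReal * ∑' n, ‖(w : ℤ → ℂ) n‖ ^ p.toReal := by
            refine mul_le_mul_of_nonneg_left ?_ (Real.rpow_nonneg hC _)
            exact hwg.tsum_le_tsum_of_inj g hg
              (fun c _ => Real.rpow_nonneg (norm_nonneg _) _) (fun m => le_rfl) hws
    have h2 : (C * ‖w‖) ^ p.toReal = C ^ p.toReal * ‖w‖ ^ p.toReal :=
      Real.mul_rpow hC (norm_nonneg w)
    rw [h2, lp.norm_rpow_eq_tsum hq w]
    exact h1

lemma kernel_vector (α : ℝ) (hα : 1 < α) (A : ℤ → ℤ → ℂ) (M : ℕ) :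
    ∃ (L : ℕ) (x : ℤ → ℂ), 0 < L ∧ (∃ n, x n ≠ 0) ∧
      (∀ n : ℤ, ¬(0 ≤ n ∧ n < (L : ℤ)) → x n = 0) ∧
      ∀ m : ℤ, ∑ a ∈ Finset.range L,
        (if ((a : ℤ)) - ⌈α * (m : ℝ)⌉ ∈ Finset.Icc (-(M : ℤ)) (M : ℤ)
          then A m (a : ℤ) else 0) * x (a : ℤ) = 0 := by
  classical
  have hα0 : (0 : ℝ) < α := by linarith
  set c : ℤ → ℤ := fun m => ⌈α * (m : ℝ)⌉ with hc_def
  set L : ℕ := ⌈((M : ℝ) + α * (M + 2) + 1) / (α - 1)⌉₊ + 1 with hL_def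
  have hL0 : 0 < L := Nat.succ_pos _
  set m1 : ℤ := ⌊((L : ℝ) - 1 + M) / α⌋ with hm1_def
  have hLreal : ((M : ℝ) + α * (M + 2) + 1) / (α - 1) < L := by
    have h := Nat.le_ceil (((M : ℝ) + α * (M + 2) + 1) / (α - 1))
    rw [hL_def]; push_cast; linarith
  have hK : m1 + (M : ℤ) + 2 < L := by
    have h1 : (m1 : ℝ) ≤ ((L : ℝ) - 1 + M) / α := Int.floor_le _
    have h2 : ((M : ℝ) + α * (M + 2) + 1) < (α - 1) * L := by
      rw [div_lt_iff₀ (by linarith)] at hLreal; linarith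
    have h3 : (m1 : ℝ) * α ≤ (L : ℝ) - 1 + M := by
      rwa [← le_div_iff₀ hα0]
    have : (m1 : ℝ) + M + 2 < (L : ℝ) := by nlinarith
    exact_mod_cast this
  have hrow : ∀ m : ℤ, -(M : ℤ) ≤ c m → c m ≤ (L : ℤ) - 1 + M →
      (-(M : ℤ) - 1 ≤ m ∧ m ≤ m1) := by
    intro m h1 h2
    constructor
    · by_contra hcon
      push_neg at hcon
      have hm2 : m ≤ -(M : ℤ) - 2 := by omega
      have hm2' : (m : ℝ) ≤ -(M : ℝ) - 2 := by exact_mod_cast hm2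
      have hlt : (c m : ℝ) < α * m + 1 := Int.ceil_lt_add_one _
      have h1' : -(M : ℝ) ≤ (c m : ℝ) := by exact_mod_cast h1
      have hm0 : (m : ℝ) ≤ 0 := by linarith
      have : α * m ≤ (m : ℝ) := by nlinarith
      linarith
    · have hle : α * (m : ℝ) ≤ (c m : ℝ) := Int.le_ceil _
      have h2' : (c m : ℝ) ≤ (L : ℝ) - 1 + M := by exact_mod_cast h2
      rw [hm1_def]
      refine Int.le_floor.2 ?_
      rw [le_div_iff₀ hα0]
      calc (m : ℝ) * α = α * m := mul_comm _ _
        _ ≤ (c m : ℝ) := hle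
        _ ≤ (L : ℝ) - 1 + M := h2'
  set B : Matrix (Fin L) (Fin L) ℂ := fun i k =>
    if (i : ℤ) ≤ m1 - (-(M : ℤ) - 1) then
      (if ((k : ℤ)) - c ((-(M : ℤ) - 1) + i) ∈ Finset.Icc (-(M : ℤ)) (M : ℤ)
        then A ((-(M : ℤ) - 1) + i) (k : ℤ) else 0)
    else 0 with hB_def
  have hdet : B.det = 0 := by
    apply Matrix.det_eq_zero_of_row_eq_zero ⟨L - 1, Nat.sub_lt hL0 one_pos⟩
    intro k
    have hc1 : ¬ (((⟨L - 1, Nat.sub_lt hL0 one_pos⟩ : Fin L) : ℤ) ≤ m1 - (-(M : ℤ) - 1)) := by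
      simp only [Fin.val_mk]
      omega
    rw [hB_def]
    simp only [hc1, if_false]
  obtain ⟨v, hv0, hBv⟩ := Matrix.exists_mulVec_eq_zero_iff.2 hdet
  refine ⟨L, fun n => if h : 0 ≤ n ∧ n < (L : ℤ) then v ⟨n.toNat, by omega⟩ else 0,
    hL0, ?_, ?_, ?_⟩
  · obtain ⟨k, hk⟩ := Function.ne_iff.1 hv0
    refine ⟨(k : ℤ), ?_⟩
    have hcond : (0 : ℤ) ≤ (k : ℤ) ∧ ((k : ℤ) : ℤ) < (L : ℤ) := by
      constructor
      · exact Int.natCast_nonneg _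
      · exact_mod_cast k.2
    beta_reduce
    rw [dif_pos hcond]
    have : (⟨((k : ℤ)).toNat, by omega⟩ : Fin L) = k := by
      ext; simp
    rw [this]; simpa using hk
  · intro n hn; beta_reduce; rw [dif_neg hn]
  · intro m
    have hxa : ∀ k : Fin L,
        (fun n : ℤ => if h : 0 ≤ n ∧ n < (L : ℤ) then v ⟨n.toNat, by omega⟩ else 0)
          ((k : ℤ)) = v k := by
      intro k
      have hcond : (0 : ℤ) ≤ ((k : ℕ) : ℤ) ∧ ((k : ℕ) : ℤ) < (L : ℤ) := by
        exact ⟨Int.natCast_nonneg _, by exact_mod_cast k.2⟩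
      beta_reduce
      rw [dif_pos hcond]
      congr 1
    have KERfin : ∑ k : Fin L,
        (if ((k : ℤ)) - c m ∈ Finset.Icc (-(M : ℤ)) (M : ℤ) then A m (k : ℤ) else 0) * v k
          = 0 := by
      by_cases hm : (-(M : ℤ) - 1 ≤ m ∧ m ≤ m1)
      · have hiL : ((m - (-(M : ℤ) - 1)).toNat) < L := by omega
        set i : Fin L := ⟨(m - (-(M : ℤ) - 1)).toNat, hiL⟩ with hi_def
        have hBvi : ∑ k : Fin L, B i k * v k = 0 := by
          have := congrFun hBv i
          simpa [Matrix.mulVec, dotProduct] using this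
        have hi_cond : ((i : ℕ) : ℤ) ≤ m1 - (-(M : ℤ) - 1) := by
          rw [hi_def]; simp only [Fin.val_mk]; omega
        have hmi : (-(M : ℤ) - 1) + ((i : ℕ) : ℤ) = m := by
          rw [hi_def]; simp only [Fin.val_mk]; omega
        calc ∑ k : Fin L,
            (if ((k : ℤ)) - c m ∈ Finset.Icc (-(M : ℤ)) (M : ℤ) then A m (k : ℤ) else 0) * v k
            = ∑ k : Fin L, B i k * v k := by
              refine Finset.sum_congr rfl fun k _ => ?_
              rw [hB_def]
              simp only [hi_cond, if_true, hmi, if_pos hi_cond]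
          _ = 0 := hBvi
      · have hz : ∀ k : Fin L,
            (if ((k : ℤ)) - c m ∈ Finset.Icc (-(M : ℤ)) (M : ℤ) then A m (k : ℤ) else 0) = 0 := by
          intro k
          rw [if_neg]
          intro hmem
          rw [Finset.mem_Icc] at hmem
          have hk0 : (0 : ℤ) ≤ (k : ℤ) := Int.natCast_nonneg _
          have hkL : ((k : ℕ) : ℤ) < (L : ℤ) := by exact_mod_cast k.2
          exact hm (hrow m (by omega) (by omega))
        simp only [hz, zero_mul, Finset.sum_const_zero]
    calc ∑ a ∈ Finset.range L,
        (if ((a : ℤ)) - ⌈α * (m : ℝ)⌉ ∈ Finset.Icc (-(M : ℤ)) (M : ℤ)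
          then A m (a : ℤ) else 0) *
          ((fun n : ℤ => if h : 0 ≤ n ∧ n < (L : ℤ) then v ⟨n.toNat, by omega⟩ else 0) (a : ℤ))
        = ∑ k : Fin L,
          (if ((k : ℤ)) - c m ∈ Finset.Icc (-(M : ℤ)) (M : ℤ) then A m (k : ℤ) else 0) * v k := by
          rw [← Fin.sum_univ_eq_sum_range]
          exact Finset.sum_congr rfl fun k _ => by rw [hxa k]
      _ = 0 := KERfin

theorem slanted_matrix_zero_approximate_eigenvalue
    (α : ℝ) (hα : 1 < α)
    (A : ℤ → ℤ → ℂ) (r : ℤ → ℝ) (hr0 : ∀ j, 0 ≤ r j)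
    (hr : ∀ m j : ℤ, ‖A m (⌈α * (m : ℝ)⌉ + j)‖ ≤ r j)
    (hSum : Summable r)
    (p : ℝ≥0∞) [hp : Fact (1 ≤ p)]
    (ε : ℝ) (hε : 0 < ε) :
    ∃ x : lp (fun _ : ℤ => ℂ) p, ‖x‖ = 1 ∧
      ∃ hf : (fun m : ℤ => ∑' n : ℤ, A m n * (x : ℤ → ℂ) n) ∈ lp (fun _ : ℤ => ℂ) p,
        ‖(⟨fun m : ℤ => ∑' n : ℤ, A m n * (x : ℤ → ℂ) n, hf⟩ :
            lp (fun _ : ℤ => ℂ) p)‖ ≤ ε := by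
  classical
  obtain ⟨s, hs⟩ : ∃ s : Finset ℤ, ∑' (a : {x : ℤ // x ∉ s}), r a < ε := by
    have h := tendsto_tsum_compl_atTop_zero r
    obtain ⟨s, hs⟩ := Filter.eventually_atTop.1 ((tendsto_order.1 h).2 ε hε)
    exact ⟨s, hs s le_rfl⟩
  set M : ℕ := s.sup fun j => j.natAbs with hM_def
  have hsub : ∀ j : ℤ, j ∉ Finset.Icc (-(M : ℤ)) (M : ℤ) → j ∉ s := by
    intro j hj hjs
    have h1 : j.natAbs ≤ M := Finset.le_sup (f := fun j : ℤ => j.natAbs) hjs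
    rw [Finset.mem_Icc] at hj; omega
  set rt : ℤ → ℝ := fun j => if j ∈ Finset.Icc (-(M : ℤ)) (M : ℤ) then 0 else r j with hrt_def
  have hrt0 : ∀ j, 0 ≤ rt j := fun j => by
    simp only [hrt_def]; split; exacts [le_rfl, hr0 j]
  have hrtle : ∀ j, rt j ≤ r j := fun j => by
    simp only [hrt_def]; split; exacts [hr0 j, le_rfl]
  have hrts : Summable rt := Summable.of_nonneg_of_le hrt0 hrtle hSum
  have hrtsum : ∑' j, rt j ≤ ε := by
    have hind : Summable (Set.indicator {x : ℤ | x ∉ s} r) := hSum.indicator _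
    have h1 : ∑' j, rt j ≤ ∑' j, Set.indicator {x : ℤ | x ∉ s} r j := by
      refine Summable.tsum_le_tsum (fun j => ?_) hrts hind
      by_cases hj : j ∈ Finset.Icc (-(M : ℤ)) (M : ℤ)
      · simp only [hrt_def, hj, if_true]
        exact Set.indicator_apply_nonneg fun _ => hr0 _
      · simp only [hrt_def, hj, if_false]
        rw [Set.indicator_of_mem (show j ∈ {x : ℤ | x ∉ s} from hsub j hj) r]
    have h2 : ∑' j, Set.indicator {x : ℤ | x ∉ s} r j = ∑' (a : {x : ℤ // x ∉ s}), r a :=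
      (tsum_subtype {x : ℤ | x ∉ s} r).symm
    rw [h2] at h1
    linarith
  obtain ⟨L, x, hL0, hxne, hxsupp, hker⟩ := kernel_vector α hα A M
  have hxfin : Set.Finite {n : ℤ | x n ≠ 0} := by
    apply (Set.finite_Icc (0 : ℤ) ((L : ℤ) - 1)).subset
    intro n hn
    rw [Set.mem_setOf_eq] at hn
    by_contra hmem
    rw [Set.mem_Icc] at hmem
    exact hn (hxsupp n (by omega))
  have hxmem : Memℓp x p := (memℓp_zero hxfin).of_exponent_ge (zero_le : (0 : ℝ≥0∞) ≤ p)
  set X0 : lp (fun _ : ℤ => ℂ) p := ⟨x, hxmem⟩ with hX0_def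
  have hX0ne : X0 ≠ 0 := by
    obtain ⟨n, hn⟩ := hxne
    intro h
    have h2 := lp.eq_zero_iff_coeFn_eq_zero.1 h
    exact hn (congrFun h2 n)
  have hN : 0 < ‖X0‖ := norm_pos_iff.2 hX0ne
  set N : ℝ := ‖X0‖ with hN_def
  set X : lp (fun _ : ℤ => ℂ) p := (N⁻¹ : ℝ) • X0 with hX_def
  have hX1 : ‖X‖ = 1 := by
    rw [hX_def, norm_smul, norm_inv, Real.norm_eq_abs, abs_of_pos hN]
    exact inv_mul_cancel₀ hN.ne'
  have hXc : ∀ n, (X : ℤ → ℂ) n = (N⁻¹ : ℝ) • x n := by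
    intro n
    rw [hX_def,
      show ((((N⁻¹ : ℝ)) • X0 : lp (fun _ : ℤ => ℂ) p) : ℤ → ℂ)
        = (N⁻¹ : ℝ) • (X0 : ℤ → ℂ) from lp.coeFn_smul _ _]
    rfl
  have hXsupp : ∀ n : ℤ, ¬(0 ≤ n ∧ n < (L : ℤ)) → (X : ℤ → ℂ) n = 0 := fun n hn => by
    rw [hXc n, hxsupp n hn, smul_zero]
  set S : Finset ℤ :=
    (Finset.range L).map ⟨fun a : ℕ => (a : ℤ), Nat.cast_injective⟩ with hS_def
  have hSmem : ∀ n : ℤ, n ∉ S → ¬(0 ≤ n ∧ n < (L : ℤ)) := by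
    intro n hn hcon
    apply hn
    rw [hS_def, Finset.mem_map]
    refine ⟨n.toNat, Finset.mem_range.2 (by omega), ?_⟩
    simp only [Function.Embedding.coeFn_mk]
    omega
  have hkerX : ∀ m : ℤ, ∑ n ∈ S,
      (if n - ⌈α * (m : ℝ)⌉ ∈ Finset.Icc (-(M : ℤ)) (M : ℤ) then A m n else 0)
        * (X : ℤ → ℂ) n = 0 := by
    intro m
    rw [hS_def, Finset.sum_map]
    simp only [Function.Embedding.coeFn_mk]
    have hcongr : ∀ a ∈ Finset.range L,
        (if ((a : ℤ)) - ⌈α * (m : ℝ)⌉ ∈ Finset.Icc (-(M : ℤ)) (M : ℤ) then A m (a : ℤ) else 0)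
            * (X : ℤ → ℂ) (a : ℤ)
        = (N⁻¹ : ℝ) •
          ((if ((a : ℤ)) - ⌈α * (m : ℝ)⌉ ∈ Finset.Icc (-(M : ℤ)) (M : ℤ) then A m (a : ℤ) else 0)
            * x (a : ℤ)) := by
      intro a _
      rw [hXc, mul_smul_comm]
    rw [Finset.sum_congr rfl hcongr, ← Finset.smul_sum, hker m, smul_zero]
  have hAX : ∀ m : ℤ, ∑' n : ℤ, A m n * (X : ℤ → ℂ) n
      = ∑ n ∈ S,
        (if n - ⌈α * (m : ℝ)⌉ ∈ Finset.Icc (-(M : ℤ)) (M : ℤ) then 0 else A m n)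
          * (X : ℤ → ℂ) n := by
    intro m
    have h1 : ∑' n : ℤ, A m n * (X : ℤ → ℂ) n = ∑ n ∈ S, A m n * (X : ℤ → ℂ) n :=
      tsum_eq_sum (fun n hn => by rw [hXsupp n (hSmem n hn), mul_zero])
    have h2 : ∀ n ∈ S, A m n * (X : ℤ → ℂ) n
        = (if n - ⌈α * (m : ℝ)⌉ ∈ Finset.Icc (-(M : ℤ)) (M : ℤ) then A m n else 0)
            * (X : ℤ → ℂ) n
          + (if n - ⌈α * (m : ℝ)⌉ ∈ Finset.Icc (-(M : ℤ)) (M : ℤ) then 0 else A m n)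
            * (X : ℤ → ℂ) n := by
      intro n _
      split <;> ring
    rw [h1, Finset.sum_congr rfl h2, Finset.sum_add_distrib, hkerX m, zero_add]
  set y : ℤ → ℤ → ℂ := fun j m =>
    (if j ∈ Finset.Icc (-(M : ℤ)) (M : ℤ) then 0 else A m (⌈α * (m : ℝ)⌉ + j))
      * (X : ℤ → ℂ) (⌈α * (m : ℝ)⌉ + j) with hy_def
  have hy : ∀ m : ℤ, ∑ n ∈ S,
      (if n - ⌈α * (m : ℝ)⌉ ∈ Finset.Icc (-(M : ℤ)) (M : ℤ) then 0 else A m n)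
        * (X : ℤ → ℂ) n
      = ∑' j : ℤ, y j m := by
    intro m
    have h1 : ∑' j : ℤ, y j m = ∑' n : ℤ,
        (if n - ⌈α * (m : ℝ)⌉ ∈ Finset.Icc (-(M : ℤ)) (M : ℤ) then 0 else A m n)
          * (X : ℤ → ℂ) n := by
      rw [← (Equiv.addLeft (⌈α * (m : ℝ)⌉)).tsum_eq
        (fun n => (if n - ⌈α * (m : ℝ)⌉ ∈ Finset.Icc (-(M : ℤ)) (M : ℤ) then 0 else A m n)
          * (X : ℤ → ℂ) n)]
      refine tsum_congr fun j => ?_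
      simp only [hy_def, Equiv.coe_addLeft, add_sub_cancel_left]
    rw [h1, tsum_eq_sum (fun n hn => by rw [hXsupp n (hSmem n hn), mul_zero])]
  have hyb : ∀ j m : ℤ, ‖y j m‖ ≤ rt j * ‖(X : ℤ → ℂ) (⌈α * (m : ℝ)⌉ + j)‖ := by
    intro j m
    simp only [hy_def]
    rw [norm_mul]
    refine mul_le_mul_of_nonneg_right ?_ (norm_nonneg _)
    by_cases hj : j ∈ Finset.Icc (-(M : ℤ)) (M : ℤ)
    · rw [if_pos hj, norm_zero]
      exact hrt0 j
    · rw [if_neg hj]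
      simp only [hrt_def]
      rw [if_neg hj]
      exact hr m j
  have hcmono : StrictMono (fun m : ℤ => ⌈α * (m : ℝ)⌉) := by
    apply strictMono_int_of_lt_succ
    intro m
    have h1 : α * (m : ℝ) + 1 ≤ α * ((m + 1 : ℤ) : ℝ) := by push_cast; nlinarith
    have h2 : ⌈α * (m : ℝ)⌉ + 1 ≤ ⌈α * ((m + 1 : ℤ) : ℝ)⌉ := by
      rw [← Int.ceil_add_one]
      exact Int.ceil_le_ceil h1
    omega
  have hYex : ∀ j : ℤ, ∃ h : Memℓp (y j) p,
      ‖(⟨y j, h⟩ : lp (fun _ : ℤ => ℂ) p)‖ ≤ rt j * ‖X‖ := by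
    intro j
    apply pullback_lp X (fun m => ⌈α * (m : ℝ)⌉ + j) ?_ (y j) (rt j) (hrt0 j) (fun m => hyb j m)
    intro a b hab
    have hab' : ⌈α * (a : ℝ)⌉ + j = ⌈α * (b : ℝ)⌉ + j := hab
    exact hcmono.injective (by omega)
  set Y : ℤ → lp (fun _ : ℤ => ℂ) p := fun j => ⟨y j, (hYex j).choose⟩ with hY_def
  have hYnorm : ∀ j, ‖Y j‖ ≤ rt j := by
    intro j
    have h1 := (hYex j).choose_spec
    exact h1.trans (le_of_eq (by rw [hX1, mul_one]))
  have hnY : Summable fun j => ‖Y j‖ :=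
    Summable.of_nonneg_of_le (fun j => norm_nonneg _) hYnorm hrts
  have hYsum : Summable Y := hnY.of_norm
  have hzm : ∀ m : ℤ, ((∑' j, Y j : lp (fun _ : ℤ => ℂ) p) : ℤ → ℂ) m = ∑' j : ℤ, y j m := by
    intro m
    have h1 := (lpEval p m).map_tsum hYsum
    calc ((∑' j, Y j : lp (fun _ : ℤ => ℂ) p) : ℤ → ℂ) m = lpEval p m (∑' j, Y j) := rfl
      _ = ∑' j, lpEval p m (Y j) := h1
      _ = ∑' j, y j m := by
          refine tsum_congr fun j => ?_
          rw [lpEval_apply, hY_def]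
  have hfeq : (fun m : ℤ => ∑' n : ℤ, A m n * (X : ℤ → ℂ) n)
      = ((∑' j, Y j : lp (fun _ : ℤ => ℂ) p) : ℤ → ℂ) := by
    funext m
    rw [hAX m, hy m, ← hzm m]
  have hf : (fun m : ℤ => ∑' n : ℤ, A m n * (X : ℤ → ℂ) n) ∈ lp (fun _ : ℤ => ℂ) p := by
    rw [hfeq]; exact (∑' j, Y j : lp (fun _ : ℤ => ℂ) p).2
  refine ⟨X, hX1, hf, ?_⟩
  have hze : (⟨fun m : ℤ => ∑' n : ℤ, A m n * (X : ℤ → ℂ) n, hf⟩ : lp (fun _ : ℤ => ℂ) p)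
      = (∑' j, Y j : lp (fun _ : ℤ => ℂ) p) := Subtype.ext hfeq
  rw [hze]
  calc ‖(∑' j, Y j : lp (fun _ : ℤ => ℂ) p)‖ ≤ ∑' j, ‖Y j‖ := norm_tsum_le_tsum_norm hnY
    _ ≤ ∑' j, rt j := Summable.tsum_le_tsum hYnorm hnY hrts
    _ ≤ ε := hrtsum
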